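/- Let 1 ≤ α ≤ 2 and let w_k be the WSGD weights for (p,q)=(1,-1). Then for every x ∈ [0, π], Σ_{k=0}^∞ w_k cos((k-1)x) = (2 sin(x/2))^α · [ (α/2) sin( (α/2)(x-π) ) sin(x) + cos( (α/2)(x-π) ) cos(x) ]. -/

import Mathlib

/-- Grünwald coefficients `g_k = (-1)^k * binom(α, k)`. -/
noncomputable def gru (α : ℝ) (k : ℕ) : ℝ :=
  (-1 : ℝ) ^ k * (∏ i ∈ Finset.range k, (α - (i : ℝ))) / (Nat.factorial k : ℝ)

/-- WSGD weights for `(p,q) = (1,0)`. -/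
noncomputable def w10 (α : ℝ) : ℕ → ℝ
  | 0 => α / 2 * gru α 0
  | k + 1 => α / 2 * gru α (k + 1) + (2 - α) / 2 * gru α k

/-- WSGD weights for `(p,q) = (1,-1)`. -/
noncomputable def w1m1 (α : ℝ) : ℕ → ℝ
  | 0 => (2 + α) / 4 * gru α 0
  | 1 => (2 + α) / 4 * gru α 1
  | k + 2 => (2 + α) / 4 * gru α (k + 2) + (2 - α) / 4 * gru α k

section aux
lemma gru_zero (α : ℝ) : gru α 0 = 1 := by simp [gru]

lemma gru_succ (α : ℝ) (k : ℕ) :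
    gru α (k + 1) = gru α k * (((k : ℝ) - α) / (k + 1)) := by
  unfold gru
  rw [Finset.prod_range_succ, Nat.factorial_succ]
  push_cast
  field_simp
  ring

lemma gru_one (α : ℝ) : gru α 1 = -α := by
  rw [gru_succ, gru_zero]; norm_num

lemma gru_pascal (α : ℝ) (k : ℕ) :
    gru (α - 1) (k + 1) = gru α (k + 1) + gru (α - 1) k := by
  induction k with
  | zero => rw [gru_one, gru_one, gru_zero]; ring
  | succ n ih =>
    have h1 : gru (α - 1) (n + 1 + 1) = gru (α - 1) (n + 1) * (((n+1 : ℝ) - (α-1)) / (n + 2)) := by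
      rw [gru_succ]; push_cast; ring_nf
    have h2 : gru α (n + 1 + 1) = gru α (n + 1) * (((n+1 : ℝ) - α) / (n + 2)) := by
      rw [gru_succ]; push_cast; ring_nf
    have h3 : gru (α - 1) (n + 1) * ((n:ℝ) + 1) = gru (α - 1) n * ((n:ℝ) - (α - 1)) := by
      rw [gru_succ]
      have : ((n:ℝ) + 1) ≠ 0 := by positivity
      field_simp
    have hα : gru α (n+1) = gru (α-1) (n+1) - gru (α-1) n := by linarith [ih]
    rw [h1, h2, hα]
    have hne : ((n:ℝ) + 2) ≠ 0 := by positivity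
    field_simp
    nlinarith [h3]

lemma sum_gru (α : ℝ) (n : ℕ) :
    ∑ k ∈ Finset.range (n + 1), gru α k = gru (α - 1) n := by
  induction n with
  | zero => simp [gru_zero]
  | succ n ih => rw [Finset.sum_range_succ, ih, gru_pascal]; ring

section bounds
variable {α : ℝ}

lemma gru_two (α : ℝ) : gru α 2 = α * (α - 1) / 2 := by
  rw [show (2:ℕ) = 1 + 1 from rfl, gru_succ, gru_one]; push_cast; ring

lemma gru_nonneg (hα1 : 1 ≤ α) (hα2 : α ≤ 2) : ∀ k, 0 ≤ gru α (k + 2) := by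
  intro k
  induction k with
  | zero => rw [gru_two]; nlinarith
  | succ n ih =>
    rw [show n + 1 + 2 = (n + 2) + 1 from rfl, gru_succ]
    have h1 : (0:ℝ) ≤ ((n:ℝ) + 2) - α := by push_cast; linarith
    have h2 : (0:ℝ) < ((n:ℝ) + 2) + 1 := by positivity
    push_cast
    positivity

lemma gru_abs_le_one {β : ℝ} (hβ0 : 0 ≤ β) (hβ1 : β ≤ 1) : ∀ n, |gru β n| ≤ 1 := by
  intro n
  induction n with
  | zero => rw [gru_zero]; norm_num
  | succ n ih =>
    rw [gru_succ, abs_mul, abs_div]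
    have h1 : |(n:ℝ) - β| ≤ (n:ℝ) + 1 := by
      rw [abs_le]; constructor <;> [linarith [Nat.cast_nonneg (α := ℝ) n]; linarith]
    have h2 : |(n:ℝ) + 1| = (n:ℝ) + 1 := abs_of_pos (by positivity)
    calc |gru β n| * (|(n:ℝ) - β| / |(n:ℝ)+1|) ≤ 1 * (((n:ℝ)+1) / ((n:ℝ)+1)) := by
          rw [h2]
          apply mul_le_mul ih (div_le_div_of_nonneg_right ?_ ?_) (by positivity) one_pos.le
          · exact h1
          · positivity
      _ ≤ 1 := by rw [div_self (by positivity : ((n:ℝ)+1) ≠ 0)]; norm_num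

lemma gru_abs_le_inv {β : ℝ} (hβ0 : 0 ≤ β) (hβ1 : β ≤ 1) :
    ∀ n : ℕ, |gru β (n + 1)| ≤ 1 / (n + 1) := by
  intro n
  induction n with
  | zero => rw [gru_one, abs_neg, abs_of_nonneg hβ0]; simpa using hβ1
  | succ n ih =>
    rw [show n + 1 + 1 = (n + 1) + 1 from rfl, gru_succ, abs_mul, abs_div]
    have hc : |((n:ℝ)+1) - β| ≤ (n:ℝ) + 1 := by
      rw [abs_le]; constructor <;> [linarith [Nat.cast_nonneg (α := ℝ) n]; linarith]
    have h2 : |((n:ℝ)+1) + 1| = (n:ℝ) + 2 := by rw [abs_of_pos (by positivity)]; ring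
    push_cast
    push_cast at ih
    calc |gru β (n+1)| * (|(n:ℝ) + 1 - β| / |(n:ℝ) + 1 + 1|)
        ≤ (1/((n:ℝ)+1)) * (((n:ℝ)+1) / ((n:ℝ)+2)) := by
          rw [show |(n:ℝ) + 1 + 1| = (n:ℝ) + 2 by rw [abs_of_pos (by positivity)]; ring]
          apply mul_le_mul ih (div_le_div_of_nonneg_right ?_ ?_) (by positivity) (by positivity)
          · convert hc using 2
          · positivity
      _ = 1 / ((n:ℝ)+2) := by field_simp
      _ ≤ 1 / ((n:ℝ) + 1 + 1) := by rw [show (n:ℝ) + 1 + 1 = (n:ℝ) + 2 by ring]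

lemma gru_abs_le_alpha (hα1 : 1 ≤ α) (hα2 : α ≤ 2) : ∀ n, |gru α n| ≤ α := by
  have key : ∀ n, |gru α (n + 1)| ≤ α := by
    intro n
    induction n with
    | zero => rw [gru_one, abs_neg, abs_of_nonneg (by linarith)]
    | succ n ih =>
      rw [show n + 1 + 1 = (n + 1) + 1 from rfl, gru_succ, abs_mul, abs_div]
      push_cast
      have hc : |((n:ℝ)+1) - α| ≤ (n:ℝ) + 2 := by
        rw [abs_le]; constructor <;> [linarith [Nat.cast_nonneg (α := ℝ) n]; linarith]
      calc |gru α (n+1)| * (|((n:ℝ)+1) - α| / |((n:ℝ)+1) + 1|)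
          ≤ α * (((n:ℝ)+2) / ((n:ℝ)+2)) := by
            rw [show |((n:ℝ)+1) + 1| = (n:ℝ) + 2 by rw [abs_of_pos (by positivity)]; ring]
            apply mul_le_mul ih (div_le_div_of_nonneg_right hc (by positivity)) (by positivity)
              (by linarith)
        _ = α := by rw [div_self (by positivity : ((n:ℝ)+2) ≠ 0), mul_one]
  intro n
  cases n with
  | zero => rw [gru_zero, abs_one]; linarith
  | succ n => exact key n
end bounds
section summable
variable {α : ℝ}

lemma summable_abs_gru (hα1 : 1 ≤ α) (hα2 : α ≤ 2) : Summable (fun k => |gru α k|) := by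
  have h2 : Summable (fun k => gru α (k + 2)) := by
    apply summable_of_sum_range_le (c := α) (fun n => gru_nonneg hα1 hα2 n)
    intro n
    cases n with
    | zero => simp; linarith
    | succ n =>
      have key : ∑ i ∈ Finset.range (n + 1), gru α (i + 2)
          = gru (α - 1) (n + 2) - gru α 0 - gru α 1 := by
        have := sum_gru α (n + 2)
        rw [Finset.sum_range_succ'] at this
        rw [Finset.sum_range_succ'] at this

        have e : ∑ i ∈ Finset.range (n + 1), gru α (i + 1 + 1)
            = ∑ i ∈ Finset.range (n + 1), gru α (i + 2) := by
          apply Finset.sum_congr rfl; intros; norm_num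
        rw [e] at this
        linarith
      rw [key, gru_zero, gru_one]
      have := gru_abs_le_one (by linarith : (0:ℝ) ≤ α - 1) (by linarith) (n + 2)
      have := abs_le.1 this
      linarith [this.2]
  have h2' : Summable (fun k => |gru α (k + 2)|) := by
    apply h2.congr; intro n; rw [abs_of_nonneg (gru_nonneg hα1 hα2 n)]
  exact (summable_nat_add_iff 2).1 h2'

lemma tendsto_gru_sub_one (hα1 : 1 ≤ α) (hα2 : α ≤ 2) :
    Filter.Tendsto (fun n => gru (α - 1) n) Filter.atTop (nhds 0) := by
  have h : Filter.Tendsto (fun n : ℕ => gru (α - 1) (n + 1)) Filter.atTop (nhds 0) := by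
    apply squeeze_zero_norm (a := fun n : ℕ => 1 / ((n:ℝ) + 1)) (fun n => gru_abs_le_inv (by linarith) (by linarith) n)
    have := tendsto_one_div_add_atTop_nhds_zero_nat (𝕜 := ℝ)
    exact this.comp (Filter.tendsto_id)
  exact (Filter.tendsto_add_atTop_iff_nat 1).1 h

lemma hasSum_gru_zero (hα1 : 1 ≤ α) (hα2 : α ≤ 2) : HasSum (fun k => gru α k) 0 := by
  have hs : Summable (fun k => gru α k) := (summable_abs_gru hα1 hα2).of_abs
  have h1 : Filter.Tendsto (fun n => ∑ k ∈ Finset.range n, gru α k)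
      Filter.atTop (nhds (∑' k, gru α k)) := hs.hasSum.tendsto_sum_nat
  have h2 : Filter.Tendsto (fun n => ∑ k ∈ Finset.range n, gru α k)
      Filter.atTop (nhds 0) := by
    have : Filter.Tendsto (fun n : ℕ => ∑ k ∈ Finset.range (n + 1), gru α k)
        Filter.atTop (nhds 0) := by
      apply (tendsto_gru_sub_one hα1 hα2).congr
      intro n; rw [sum_gru]
    exact (Filter.tendsto_add_atTop_iff_nat 1).1 this
  have := tendsto_nhds_unique h1 h2
  rw [← this]
  exact hs.hasSum
end summable
section disk
open Complex Metric
variable {α : ℝ}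

lemma summable_gru_pow (hα1 : 1 ≤ α) (hα2 : α ≤ 2) {y : ℂ} (hy : ‖y‖ < 1) :
    Summable (fun k => (gru α k : ℂ) * y ^ k) := by
  apply Summable.of_norm_bounded (g := fun k => α * ‖y‖ ^ k)
    ((summable_geometric_of_lt_one (norm_nonneg y) hy).mul_left α)
  intro k
  rw [norm_mul, norm_pow, Complex.norm_real]
  exact mul_le_mul_of_nonneg_right (gru_abs_le_alpha hα1 hα2 k) (by positivity)

lemma summable_gru_deriv (hα1 : 1 ≤ α) (hα2 : α ≤ 2) {R : ℝ} (hR0 : 0 < R) (hR : R < 1)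
    {y : ℂ} (hy : ‖y‖ ≤ R) :
    Summable (fun n : ℕ => (gru α n : ℂ) * ((n : ℂ) * y ^ (n - 1))) ∧
    ∀ n : ℕ, ‖(gru α n : ℂ) * ((n : ℂ) * y ^ (n - 1))‖ ≤ α / R * ((n : ℝ) * R ^ n) := by
  have hsum : Summable (fun n : ℕ => α / R * ((n : ℝ) * R ^ n)) := by
    have : Summable (fun n : ℕ => (n : ℝ) ^ 1 * R ^ n) := by
      apply summable_pow_mul_geometric_of_norm_lt_one
      rw [Real.norm_eq_abs, abs_of_pos hR0]; exact hR
    simpa using this.mul_left (α / R)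
  have hb : ∀ n : ℕ, ‖(gru α n : ℂ) * ((n : ℂ) * y ^ (n - 1))‖ ≤ α / R * ((n : ℝ) * R ^ n) := by
    intro n
    rw [norm_mul, norm_mul, norm_pow, Complex.norm_real, Complex.norm_natCast]
    cases n with
    | zero => simp
    | succ m =>
      have h1 : ‖y‖ ^ (m + 1 - 1) ≤ R ^ m := by
        simpa using pow_le_pow_left₀ (norm_nonneg y) hy m
      have h2 : |gru α (m+1)| ≤ α := gru_abs_le_alpha hα1 hα2 (m+1)
      have h3 : α / R * (((m:ℝ)+1) * R ^ (m+1)) = α * (((m:ℝ)+1) * R ^ m) := by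
        rw [pow_succ]; field_simp
      push_cast
      rw [h3]
      have : |gru α (m+1)| * (((m:ℝ)+1) * ‖y‖ ^ (m + 1 - 1)) ≤ α * (((m:ℝ)+1) * R ^ m) := by
        apply mul_le_mul h2 _ (by positivity) (by linarith)
        exact mul_le_mul_of_nonneg_left h1 (by positivity)
      simpa using this
  exact ⟨Summable.of_norm_bounded hsum hb, hb⟩

/-- The binomial series on the open unit disk. -/
lemma hasSum_gru_cpow_ball (hα1 : 1 ≤ α) (hα2 : α ≤ 2) {w : ℂ} (hw : ‖w‖ < 1) :
    HasSum (fun k => (gru α k : ℂ) * w ^ k) ((1 - w) ^ (α : ℂ)) := by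
  set F : ℂ → ℂ := fun y => ∑' k, (gru α k : ℂ) * y ^ k with hF
  set D : ℂ → ℂ := fun y => ∑' n, (gru α n : ℂ) * ((n : ℂ) * y ^ (n - 1)) with hD
  -- membership facts
  have slit : ∀ y : ℂ, y ∈ ball (0:ℂ) 1 → (1 - y) ∈ Complex.slitPlane := by
    intro y hy
    rw [mem_ball, dist_zero_right] at hy
    left
    have : y.re ≤ ‖y‖ := Complex.re_le_norm y
    simp only [Complex.sub_re, Complex.one_re]
    linarith
  have hne : ∀ y : ℂ, y ∈ ball (0:ℂ) 1 → (1 - y) ≠ 0 := by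
    intro y hy
    have := slit y hy
    exact Complex.slitPlane_ne_zero this
  -- derivative of F
  have hFderiv : ∀ y : ℂ, y ∈ ball (0:ℂ) 1 → HasDerivAt F (D y) y := by
    intro y hy
    rw [mem_ball, dist_zero_right] at hy
    set R : ℝ := (‖y‖ + 1) / 2 with hRdef
    have hR0 : 0 < R := by positivity
    have hR1 : R < 1 := by rw [hRdef]; linarith
    have hyR : ‖y‖ < R := by rw [hRdef]; linarith [norm_nonneg y]
    apply hasDerivAt_tsum_of_isPreconnected
      (u := fun n : ℕ => α / R * ((n : ℝ) * R ^ n))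
      (g := fun n y => (gru α n : ℂ) * y ^ n)
      (g' := fun n y => (gru α n : ℂ) * ((n : ℂ) * y ^ (n - 1)))
      ?_ (isOpen_ball (x := (0:ℂ)) (ε := R)) (convex_ball (0:ℂ) R).isPreconnected
      ?_ ?_ (mem_ball_self hR0) ?_ (by rwa [mem_ball, dist_zero_right])
    · have : Summable (fun n : ℕ => (n : ℝ) ^ 1 * R ^ n) := by
        apply summable_pow_mul_geometric_of_norm_lt_one
        rw [Real.norm_eq_abs, abs_of_pos hR0]; exact hR1
      simpa using this.mul_left (α / R)
    · intro n z _
      exact (hasDerivAt_pow n z).const_mul _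
    · intro n z hz
      rw [mem_ball, dist_zero_right] at hz
      exact (summable_gru_deriv hα1 hα2 hR0 hR1 hz.le).2 n
    · exact summable_gru_pow hα1 hα2 (by simp)
  -- the ODE : (1 - y) * D y = -α * F y on the ball
  have hODE : ∀ y : ℂ, y ∈ ball (0:ℂ) 1 → (1 - y) * D y = -(α:ℂ) * F y := by
    intro y hy
    rw [mem_ball, dist_zero_right] at hy
    have hFs : HasSum (fun k => (gru α k : ℂ) * y ^ k) (F y) :=
      (summable_gru_pow hα1 hα2 hy).hasSum
    have hcs : HasSum (fun n : ℕ => (gru α n : ℂ) * ((n : ℂ) * y ^ (n - 1))) (D y) := by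
      set R : ℝ := (‖y‖ + 1) / 2 with hRdef
      have hR0 : 0 < R := by positivity
      have hR1 : R < 1 := by rw [hRdef]; linarith
      have hyR : ‖y‖ ≤ R := by rw [hRdef]; linarith [norm_nonneg y]
      exact ((summable_gru_deriv hα1 hα2 hR0 hR1 hyR).1).hasSum
    have h3 : HasSum (fun m : ℕ => (gru α (m+1) : ℂ) * (((m:ℂ)+1) * y ^ m)) (D y) := by
      have h := (hasSum_nat_add_iff' (f := fun n : ℕ => (gru α n : ℂ) * ((n : ℂ) * y ^ (n - 1))) 1).2 hcs
      simp only [Finset.range_one, Finset.sum_singleton, Nat.cast_zero, zero_mul, mul_zero,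
        sub_zero] at h
      have e : (fun n : ℕ => (gru α (n+1) : ℂ) * (((n+1:ℕ) : ℂ) * y ^ (n + 1 - 1)))
          = fun m : ℕ => (gru α (m+1) : ℂ) * (((m:ℂ)+1) * y ^ m) := by
        funext n; push_cast; ring_nf
      rwa [e] at h
    have h1 : HasSum (fun m : ℕ => (m : ℂ) * (gru α m : ℂ) * y ^ m) (y * D y) := by
      have h := hcs.mul_left y
      have e : (fun n : ℕ => y * ((gru α n : ℂ) * ((n : ℂ) * y ^ (n - 1))))
          = fun m : ℕ => (m : ℂ) * (gru α m : ℂ) * y ^ m := by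
        funext n
        cases n with
        | zero => simp
        | succ m => simp only [Nat.add_sub_cancel]; push_cast; ring
      rwa [e] at h
    have h2 : HasSum (fun m : ℕ => (m : ℂ) * (gru α m : ℂ) * y ^ m - (α:ℂ) * ((gru α m : ℂ) * y ^ m))
        (y * D y - (α:ℂ) * F y) := h1.sub (hFs.mul_left _)
    have hcoef : (fun m : ℕ => (gru α (m+1) : ℂ) * (((m:ℂ)+1) * y ^ m))
        = fun m : ℕ => (m : ℂ) * (gru α m : ℂ) * y ^ m - (α:ℂ) * ((gru α m : ℂ) * y ^ m) := by
      funext m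
      have hg : (gru α (m+1) : ℝ) * ((m:ℝ)+1) = gru α m * ((m:ℝ) - α) := by
        rw [gru_succ]
        field_simp
      have hgc : (gru α (m+1) : ℂ) * ((m:ℂ)+1) = (gru α m : ℂ) * ((m:ℂ) - (α:ℂ)) := by
        have := congrArg (Complex.ofReal) hg
        push_cast at this
        convert this using 1 <;> push_cast <;> ring
      calc (gru α (m+1) : ℂ) * (((m:ℂ)+1) * y ^ m) = ((gru α (m+1) : ℂ) * ((m:ℂ)+1)) * y ^ m := by ring
        _ = ((gru α m : ℂ) * ((m:ℂ) - (α:ℂ))) * y ^ m := by rw [hgc]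
        _ = (m : ℂ) * (gru α m : ℂ) * y ^ m - (α:ℂ) * ((gru α m : ℂ) * y ^ m) := by ring
    rw [hcoef] at h3
    have hDval : D y = y * D y - (α:ℂ) * F y := h3.unique h2
    linear_combination hDval
  -- constancy of G := F * (1-y)^(-alpha)
  set G : ℂ → ℂ := fun y => F y * (1 - y) ^ (-(α:ℂ)) with hG
  have hGderiv : ∀ y : ℂ, y ∈ ball (0:ℂ) 1 → HasDerivAt G 0 y := by
    intro y hy
    have hsl := slit y hy
    have hny := hne y hy
    have hd1 : HasDerivAt F (D y) y := hFderiv y hy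
    have hbase : HasDerivAt (fun z : ℂ => 1 - z) (-1) y := by
      simpa using (hasDerivAt_id y).const_sub 1
    have hd2 : HasDerivAt (fun z : ℂ => (1 - z) ^ (-(α:ℂ)))
        (-(α:ℂ) * (1 - y) ^ (-(α:ℂ) - 1) * (-1)) y := hbase.cpow_const hsl
    have hmul := hd1.mul hd2
    have hval : D y * (1 - y) ^ (-(α:ℂ)) + F y * (-(α:ℂ) * (1 - y) ^ (-(α:ℂ) - 1) * (-1)) = 0 := by
      have hsplit : (1 - y) ^ (-(α:ℂ) - 1) * (1 - y) = (1 - y) ^ (-(α:ℂ)) := by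
        calc (1 - y) ^ (-(α:ℂ) - 1) * (1 - y)
            = (1 - y) ^ ((-(α:ℂ) - 1) + 1) := by
              rw [Complex.cpow_add _ _ hny, Complex.cpow_one]
          _ = (1 - y) ^ (-(α:ℂ)) := by norm_num
      rw [← hsplit]
      have := hODE y hy
      linear_combination (1 - y) ^ (-(α:ℂ) - 1) * this
    rw [hval] at hmul
    exact hmul
  have hconst : ∀ y ∈ ball (0:ℂ) 1, G y = G 0 := by
    intro y hy
    apply (convex_ball (0:ℂ) 1).is_const_of_fderivWithin_eq_zero (𝕜 := ℂ) (f := G)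
      ?_ ?_ hy (mem_ball_self one_pos)
    · intro z hz
      exact ((hGderiv z hz).differentiableAt).differentiableWithinAt
    · intro z hz
      rw [fderivWithin_of_isOpen isOpen_ball hz, ((hGderiv z hz).hasFDerivAt).fderiv]
      exact ContinuousLinearMap.ext fun v => by simp
  have hG0 : G 0 = 1 := by
    have hF0 : F 0 = 1 := by
      have e : F 0 = ∑' k, (gru α k : ℂ) * (0:ℂ) ^ k := rfl
      rw [e, tsum_eq_single 0 (fun n hn => by simp [zero_pow hn])]
      simp [gru_zero]
    have e : G 0 = F 0 * (1 - 0 : ℂ) ^ (-(α:ℂ)) := rfl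
    rw [e, hF0]
    simp
  -- conclude
  have hwball : w ∈ ball (0:ℂ) 1 := by rwa [mem_ball, dist_zero_right]
  have hkey : F w * (1 - w) ^ (-(α:ℂ)) = 1 := by
    have h := hconst w hwball
    rw [hG0] at h
    exact h
  have hnw := hne w hwball
  have hcpne : (1 - w) ^ ((α:ℂ)) ≠ 0 := by
    simp [Complex.cpow_eq_zero_iff, hnw]
  have hFw : F w = (1 - w) ^ ((α:ℂ)) := by
    have : F w * ((1 - w) ^ (-(α:ℂ)) * (1 - w) ^ ((α:ℂ))) = (1 - w) ^ ((α:ℂ)) := by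
      rw [← mul_assoc, hkey, one_mul]
    rwa [← Complex.cpow_add _ _ hnw, neg_add_cancel, Complex.cpow_zero, mul_one] at this
  rw [← hFw]
  exact (summable_gru_pow hα1 hα2 hw).hasSum
end disk
section boundary
open Complex Metric Filter Set
variable {α : ℝ}

lemma hasSum_gru_cpow_boundary (hα1 : 1 ≤ α) (hα2 : α ≤ 2) {z : ℂ} (hz : ‖z‖ = 1)
    (hsl : (1 - z) ∈ Complex.slitPlane) :
    HasSum (fun k => (gru α k : ℂ) * z ^ k) ((1 - z) ^ (α : ℂ)) := by
  have habs : Summable (fun k => |gru α k|) := summable_abs_gru hα1 hα2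
  have hnormeq : ∀ k, ‖(gru α k : ℂ) * z ^ k‖ = |gru α k| := by
    intro k
    rw [norm_mul, norm_pow, hz, one_pow, mul_one, Complex.norm_real, Real.norm_eq_abs]
  have hsummC : Summable (fun k => (gru α k : ℂ) * z ^ k) := by
    apply Summable.of_norm_bounded habs
    intro k; rw [hnormeq k]
  have hev : ∀ᶠ r : ℝ in nhdsWithin 1 (Iio 1), r ∈ Ioo (-1:ℝ) 1 :=
    eventually_of_mem (Ioo_mem_nhdsLT (by norm_num : (-1:ℝ) < 1)) (fun _ h => h)
  have hnorm_rz : ∀ r : ℝ, r ∈ Ioo (-1:ℝ) 1 → ‖(r : ℂ) * z‖ < 1 := by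
    intro r hr
    rw [norm_mul, hz, mul_one, Complex.norm_real, Real.norm_eq_abs, abs_lt]
    exact ⟨hr.1, hr.2⟩
  -- limit of tsums
  have h1 : Tendsto (fun r : ℝ => ∑' k, (gru α k : ℂ) * ((r : ℂ) * z) ^ k)
      (nhdsWithin 1 (Iio 1)) (nhds (∑' k, (gru α k : ℂ) * z ^ k)) := by
    apply tendsto_tsum_of_dominated_convergence habs
    · intro k
      have hc : Continuous (fun r : ℝ => (gru α k : ℂ) * ((r : ℂ) * z) ^ k) := by
        continuity
      have := (hc.tendsto 1).mono_left (nhdsWithin_le_nhds (s := Iio 1))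
      simpa using this
    · filter_upwards [hev] with r hr k
      rw [norm_mul, norm_pow, Complex.norm_real, Real.norm_eq_abs]
      have h1 : ‖(r:ℂ) * z‖ ≤ 1 := (hnorm_rz r hr).le
      calc |gru α k| * ‖(r:ℂ) * z‖ ^ k ≤ |gru α k| * 1 := by
            apply mul_le_mul_of_nonneg_left _ (abs_nonneg _)
            exact pow_le_one₀ (norm_nonneg _) h1
        _ = |gru α k| := mul_one _
  -- the same limit equals (1-z)^α
  have h2 : Tendsto (fun r : ℝ => ∑' k, (gru α k : ℂ) * ((r : ℂ) * z) ^ k)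
      (nhdsWithin 1 (Iio 1)) (nhds ((1 - z) ^ (α : ℂ))) := by
    have heq : ∀ᶠ r : ℝ in nhdsWithin 1 (Iio 1),
        (1 - (r : ℂ) * z) ^ (α : ℂ) = ∑' k, (gru α k : ℂ) * ((r : ℂ) * z) ^ k := by
      filter_upwards [hev] with r hr
      exact (hasSum_gru_cpow_ball hα1 hα2 (hnorm_rz r hr)).tsum_eq.symm
    apply Tendsto.congr' heq
    have hbase : Tendsto (fun r : ℝ => 1 - (r : ℂ) * z) (nhdsWithin 1 (Iio 1)) (nhds (1 - z)) := by
      have hc : Continuous (fun r : ℝ => 1 - (r : ℂ) * z) := by continuity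
      have := (hc.tendsto 1).mono_left (nhdsWithin_le_nhds (s := Iio 1))
      simpa using this
    exact (continuousAt_cpow_const hsl).tendsto.comp hbase
  have := tendsto_nhds_unique h1 h2
  rw [← this]
  exact hsummC.hasSum
end boundary
section polar
open Complex Real

lemma cpow_polar {r θ a : ℝ} (hr : 0 < r) (hθ1 : -Real.pi < θ) (hθ2 : θ ≤ Real.pi) :
    ((r : ℂ) * Complex.exp (θ * I)) ^ (a : ℂ)
      = ((r ^ a : ℝ) : ℂ) * Complex.exp ((a * θ : ℝ) * I) := by
  have hw : ((r : ℂ) * Complex.exp (θ * I)) ≠ 0 :=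
    mul_ne_zero (by exact_mod_cast hr.ne') (Complex.exp_ne_zero _)
  rw [Complex.cpow_def_of_ne_zero hw]
  have habs : ‖((r : ℂ) * Complex.exp (θ * I))‖ = r := by
    rw [norm_mul, Complex.norm_exp_ofReal_mul_I, mul_one, Complex.norm_real, Real.norm_eq_abs, abs_of_pos hr]
  have harg : Complex.arg ((r : ℂ) * Complex.exp (θ * I)) = θ := by
    rw [Complex.exp_mul_I, Complex.arg_real_mul _ hr]
    exact Complex.arg_cos_add_sin_mul_I ⟨hθ1, hθ2⟩
  have hlog : Complex.log ((r : ℂ) * Complex.exp (θ * I))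
      = ((Real.log r : ℝ) : ℂ) + (θ : ℂ) * I := by
    rw [Complex.log, habs, harg]
  rw [hlog]
  have : (((Real.log r : ℝ) : ℂ) + (θ : ℂ) * I) * (a : ℂ)
      = ((a * Real.log r : ℝ) : ℂ) + ((a * θ : ℝ) : ℂ) * I := by
    push_cast; ring
  rw [this, Complex.exp_add, ← Complex.ofReal_exp]
  congr 2
  rw [Real.rpow_def_of_pos hr]
  ring_nf

lemma one_sub_exp (x : ℝ) :
    (1 : ℂ) - Complex.exp (x * I)
      = ((2 * Real.sin (x / 2) : ℝ) : ℂ) * Complex.exp (((x - Real.pi) / 2 : ℝ) * I) := by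
  have hc : Real.cos ((x - Real.pi) / 2) = Real.sin (x / 2) := by
    rw [show (x - Real.pi) / 2 = -(Real.pi / 2 - x / 2) by ring, Real.cos_neg,
      Real.cos_pi_div_two_sub]
  have hs : Real.sin ((x - Real.pi) / 2) = -Real.cos (x / 2) := by
    rw [show (x - Real.pi) / 2 = -(Real.pi / 2 - x / 2) by ring, Real.sin_neg,
      Real.sin_pi_div_two_sub]
  apply Complex.ext
  · simp only [Complex.sub_re, Complex.one_re, Complex.exp_ofReal_mul_I_re,
      Complex.mul_re, Complex.ofReal_re, Complex.ofReal_im, Complex.exp_ofReal_mul_I_im,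
      zero_mul, sub_zero]
    rw [hc]
    have h2 : Real.cos x = 1 - 2 * Real.sin (x / 2) ^ 2 := by
      have hcc : Real.cos (2 * (x/2)) = 2 * Real.cos (x/2) ^ 2 - 1 := Real.cos_two_mul (x/2)
      rw [show 2 * (x/2) = x by ring] at hcc
      have h := Real.sin_sq_add_cos_sq (x / 2)
      nlinarith
    nlinarith [h2]
  · simp only [Complex.sub_im, Complex.one_im, Complex.exp_ofReal_mul_I_im,
      Complex.mul_im, Complex.ofReal_re, Complex.ofReal_im, Complex.exp_ofReal_mul_I_re,
      zero_mul, add_zero]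
    rw [hs]
    have h2 : Real.sin x = 2 * Real.sin (x / 2) * Real.cos (x / 2) := by
      rw [show x = 2 * (x / 2) by ring, Real.sin_two_mul]
      ring_nf
    nlinarith [h2]
end polar

end aux

open Complex Metric Filter Set in
theorem w1m1_generating_function (α : ℝ) (hα1 : 1 ≤ α) (hα2 : α ≤ 2)
    (x : ℝ) (hx0 : 0 ≤ x) (hxpi : x ≤ Real.pi) :
    HasSum (fun k : ℕ => w1m1 α k * Real.cos (((k : ℝ) - 1) * x))
      ((2 * Real.sin (x / 2)) ^ α *
        (α / 2 * Real.sin (α / 2 * (x - Real.pi)) * Real.sin x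
          + Real.cos (α / 2 * (x - Real.pi)) * Real.cos x)) := by
  rcases eq_or_lt_of_le hx0 with hx | hx
  · -- case x = 0
    subst hx
    have hrhs : (2 * Real.sin ((0:ℝ) / 2)) ^ α *
        (α / 2 * Real.sin (α / 2 * ((0:ℝ) - Real.pi)) * Real.sin 0
          + Real.cos (α / 2 * ((0:ℝ) - Real.pi)) * Real.cos 0) = 0 := by
      rw [show (0:ℝ)/2 = 0 by norm_num, Real.sin_zero, mul_zero,
        Real.zero_rpow (by linarith : α ≠ 0), zero_mul]
    rw [hrhs]
    have hterm : (fun k : ℕ => w1m1 α k * Real.cos (((k : ℝ) - 1) * 0)) = fun k => w1m1 α k := by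
      funext k; rw [mul_zero, Real.cos_zero, mul_one]
    rw [hterm]
    have hg := hasSum_gru_zero hα1 hα2
    have hA : HasSum (fun k => (2 + α)/4 * gru α k) 0 := by
      have := hg.mul_left ((2 + α)/4); rwa [mul_zero] at this
    have hB : HasSum (fun k => (2 - α)/4 * gru α k) 0 := by
      have := hg.mul_left ((2 - α)/4); rwa [mul_zero] at this
    have hAshift : HasSum (fun n => (2 + α)/4 * gru α (n + 2))
        (0 - ∑ i ∈ Finset.range 2, (2 + α)/4 * gru α i) :=
      (hasSum_nat_add_iff' 2).2 hA
    have h := hAshift.add hB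
    have e : (fun n => (2 + α)/4 * gru α (n + 2) + (2 - α)/4 * gru α n)
        = fun n => w1m1 α (n + 2) := by
      funext n; rfl
    rw [e] at h
    have ev : (0 - ∑ i ∈ Finset.range 2, (2 + α)/4 * gru α i) + 0
        = 0 - ∑ i ∈ Finset.range 2, w1m1 α i := by
      simp [Finset.sum_range_succ, w1m1, gru_zero, gru_one]
    rw [ev] at h
    exact (hasSum_nat_add_iff' 2).1 h
  · -- case 0 < x ≤ π
    set z : ℂ := Complex.exp ((x:ℝ) * I) with hzdef
    have hz : ‖z‖ = 1 := by
      rw [hzdef, Complex.norm_exp_ofReal_mul_I]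
    have hcos : Real.cos x < 1 := by
      have := Real.cos_lt_cos_of_nonneg_of_le_pi (le_refl 0) hxpi hx
      rwa [Real.cos_zero] at this
    have hsl : (1 - z) ∈ Complex.slitPlane := by
      left
      simp only [Complex.sub_re, Complex.one_re, hzdef, Complex.exp_ofReal_mul_I_re]
      linarith
    set W : ℂ := (1 - z) ^ (α : ℂ) with hWdef
    have hW : HasSum (fun k => (gru α k : ℂ) * z ^ k) W :=
      hasSum_gru_cpow_boundary hα1 hα2 hz hsl
    have hE : ∀ k : ℕ, ∀ c : ℝ, Complex.exp ((c:ℝ) * I) * z ^ k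
        = Complex.exp ((((k:ℝ) * x + c : ℝ) : ℂ) * I) := by
      intro k c
      rw [hzdef, ← Complex.exp_nat_mul, ← Complex.exp_add]
      congr 1
      push_cast
      ring
    -- part A
    have hA : HasSum
        (fun k => (((2 + α)/4 : ℝ) : ℂ) * Complex.exp (((-x : ℝ) : ℂ) * I) * ((gru α k : ℂ) * z ^ k))
        ((((2 + α)/4 : ℝ) : ℂ) * Complex.exp (((-x : ℝ) : ℂ) * I) * W) := hW.mul_left _
    have e1 : (fun k : ℕ => (((2 + α)/4 : ℝ) : ℂ) * Complex.exp (((-x : ℝ) : ℂ) * I) * ((gru α k : ℂ) * z ^ k))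
        = fun k : ℕ => (((2 + α)/4 * gru α k : ℝ) : ℂ) * Complex.exp (((((k:ℝ) - 1) * x : ℝ) : ℂ) * I) := by
      funext k
      rw [show ((((k:ℝ) - 1) * x : ℝ) : ℂ) = (((k:ℝ) * x + -x : ℝ) : ℂ) by push_cast; ring,
        ← hE k (-x)]
      push_cast
      ring
    rw [e1] at hA
    -- part B
    have hB : HasSum
        (fun k => (((2 - α)/4 : ℝ) : ℂ) * Complex.exp (((x : ℝ) : ℂ) * I) * ((gru α k : ℂ) * z ^ k))
        ((((2 - α)/4 : ℝ) : ℂ) * Complex.exp (((x : ℝ) : ℂ) * I) * W) := hW.mul_left _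
    set s : ℕ → ℂ := fun k => ((w1m1 α k : ℝ) : ℂ) * Complex.exp (((((k:ℝ) - 1) * x : ℝ) : ℂ) * I)
      - (((2 + α)/4 * gru α k : ℝ) : ℂ) * Complex.exp (((((k:ℝ) - 1) * x : ℝ) : ℂ) * I) with hsdef
    have hs0 : s 0 = 0 := by
      rw [hsdef]
      simp only [w1m1]
      ring
    have hs1 : s 1 = 0 := by
      rw [hsdef]
      simp only [w1m1]
      ring
    have e2 : (fun k : ℕ => (((2 - α)/4 : ℝ) : ℂ) * Complex.exp (((x : ℝ) : ℂ) * I) * ((gru α k : ℂ) * z ^ k))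
        = fun n : ℕ => s (n + 2) := by
      funext n
      rw [hsdef]
      simp only [w1m1]
      have harg : (((((n+2:ℕ):ℝ) - 1) * x : ℝ) : ℂ) = (((n:ℝ) * x + x : ℝ) : ℂ) := by
        push_cast; ring
      rw [harg, ← hE n x]
      push_cast
      ring
    rw [e2] at hB
    have hBval : ((((2 - α)/4 : ℝ) : ℂ) * Complex.exp (((x : ℝ) : ℂ) * I) * W)
        = ((((2 - α)/4 : ℝ) : ℂ) * Complex.exp (((x : ℝ) : ℂ) * I) * W) - ∑ i ∈ Finset.range 2, s i := by
      rw [Finset.sum_range_succ, Finset.sum_range_one, hs0, hs1]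
      ring
    rw [hBval] at hB
    have hBs : HasSum s ((((2 - α)/4 : ℝ) : ℂ) * Complex.exp (((x : ℝ) : ℂ) * I) * W) :=
      (hasSum_nat_add_iff' 2).1 hB
    -- total complex sum
    have htot := hA.add hBs
    have e3 : (fun k : ℕ => (((2 + α)/4 * gru α k : ℝ) : ℂ) * Complex.exp (((((k:ℝ) - 1) * x : ℝ) : ℂ) * I) + s k)
        = fun k : ℕ => ((w1m1 α k : ℝ) : ℂ) * Complex.exp (((((k:ℝ) - 1) * x : ℝ) : ℂ) * I) := by
      funext k
      rw [hsdef]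
      ring
    rw [e3] at htot
    -- take real parts
    have hre := Complex.hasSum_re htot
    have e4 : (fun k : ℕ => (((w1m1 α k : ℝ) : ℂ) * Complex.exp (((((k:ℝ) - 1) * x : ℝ) : ℂ) * I)).re)
        = fun k : ℕ => w1m1 α k * Real.cos (((k:ℝ) - 1) * x) := by
      funext k
      rw [Complex.re_ofReal_mul, Complex.exp_ofReal_mul_I_re]
    rw [e4] at hre
    -- compute the value
    set R : ℝ := (2 * Real.sin (x / 2)) ^ α with hRdef
    set φ : ℝ := α * ((x - Real.pi) / 2) with hφdef
    have hsinpos : 0 < Real.sin (x / 2) := by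
      apply Real.sin_pos_of_pos_of_lt_pi (by linarith)
      have := Real.pi_pos
      linarith
    have hWeq : W = ((R : ℝ) : ℂ) * Complex.exp ((φ : ℝ) * I) := by
      rw [hWdef, hzdef, one_sub_exp x]
      rw [cpow_polar (by linarith : (0:ℝ) < 2 * Real.sin (x/2))
        (by have := Real.pi_pos; linarith : -Real.pi < (x - Real.pi)/2)
        (by have := Real.pi_pos; linarith : (x - Real.pi)/2 ≤ Real.pi)]
    have comb : ∀ c d : ℝ, ((c : ℝ) : ℂ) * Complex.exp (((d : ℝ) : ℂ) * I) * (((R : ℝ) : ℂ) * Complex.exp ((φ : ℝ) * I))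
        = (((c * R : ℝ)) : ℂ) * Complex.exp (((φ + d : ℝ) : ℂ) * I) := by
      intro c d
      calc ((c : ℝ) : ℂ) * Complex.exp (((d : ℝ) : ℂ) * I) * (((R : ℝ) : ℂ) * Complex.exp ((φ : ℝ) * I))
          = (((c : ℝ) : ℂ) * ((R : ℝ) : ℂ)) * (Complex.exp (((d : ℝ) : ℂ) * I) * Complex.exp ((φ : ℝ) * I)) := by ring
        _ = (((c * R : ℝ)) : ℂ) * Complex.exp (((d : ℝ) : ℂ) * I + ((φ : ℝ) : ℂ) * I) := by
            rw [← Complex.exp_add]; push_cast; ring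
        _ = (((c * R : ℝ)) : ℂ) * Complex.exp (((φ + d : ℝ) : ℂ) * I) := by
            congr 2; push_cast; ring
    have hval : ((((2 + α)/4 : ℝ) : ℂ) * Complex.exp (((-x : ℝ) : ℂ) * I) * W
        + (((2 - α)/4 : ℝ) : ℂ) * Complex.exp (((x : ℝ) : ℂ) * I) * W)
        = ((((2 + α)/4 * R : ℝ)) : ℂ) * Complex.exp (((φ + -x : ℝ) : ℂ) * I)
          + ((((2 - α)/4 * R : ℝ)) : ℂ) * Complex.exp (((φ + x : ℝ) : ℂ) * I) := by
      rw [hWeq, comb ((2 + α)/4) (-x), comb ((2 - α)/4) x]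
    rw [hval] at hre
    have hre2 : (((((2 + α)/4 * R : ℝ)) : ℂ) * Complex.exp (((φ + -x : ℝ) : ℂ) * I)
          + ((((2 - α)/4 * R : ℝ)) : ℂ) * Complex.exp (((φ + x : ℝ) : ℂ) * I)).re
        = (2 + α)/4 * R * Real.cos (φ + -x) + (2 - α)/4 * R * Real.cos (φ + x) := by
      rw [Complex.add_re, Complex.re_ofReal_mul, Complex.re_ofReal_mul,
        Complex.exp_ofReal_mul_I_re, Complex.exp_ofReal_mul_I_re]
    rw [hre2] at hre
    have hfinal : (2 + α)/4 * R * Real.cos (φ + -x) + (2 - α)/4 * R * Real.cos (φ + x)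
        = R * (α / 2 * Real.sin (α / 2 * (x - Real.pi)) * Real.sin x
          + Real.cos (α / 2 * (x - Real.pi)) * Real.cos x) := by
      have hφ' : φ = α / 2 * (x - Real.pi) := by rw [hφdef]; ring
      rw [hφ', Real.cos_add, Real.cos_add, Real.cos_neg, Real.sin_neg]
      ring
    rw [hfinal] at hre
    exact hre
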